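/- For every x in the open interval (r₊, ∞), the function f is differentiable at x with derivative f'(x) = ( (x² + (l + a·cos θ)²) · ( (M − x)³ − M·(M² − a² − Q² + l²) ) ) / ( 2·a·x²·Δ(x)^{3/2}·sin θ ). -/

import Mathlib

/-- derivative of `f` on `(r₊, ∞)` for the
Kerr-Newman-Taub-NUT trapping parametrization. -/
theorem stmt_0 (M a l Q θ rp : ℝ) (Δ f : ℝ → ℝ)
    (hM : 0 < M) (ha : 0 < a) (hsub : 0 < M^2 - a^2 + l^2 - Q^2)
    (hθ : θ ∈ Set.Ioo 0 Real.pi)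
    (hΔ : ∀ x, Δ x = x^2 - 2*M*x + a^2 - l^2 + Q^2)
    (hrp : rp = M + Real.sqrt (M^2 - a^2 + l^2 - Q^2))
    (hf : ∀ x, f x = ((2*x - 2*M) * (x^2 + (l + a*Real.cos θ)^2) - 4*x*Δ x) /
        (4*a*x*Real.sqrt (Δ x) * Real.sin θ)) :
    ∀ x ∈ Set.Ioi rp,
      HasDerivAt f
        (((x^2 + (l + a*Real.cos θ)^2) * ((M - x)^3 - M*(M^2 - a^2 - Q^2 + l^2))) /
          (2*a*x^2 * Real.sqrt (Δ x)^3 * Real.sin θ)) x := by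
  intro x hx
  set C := l + a * Real.cos θ with hC
  have hsq : Real.sqrt (M^2 - a^2 + l^2 - Q^2) ^ 2 = M^2 - a^2 + l^2 - Q^2 :=
    Real.sq_sqrt hsub.le
  have hsqnn : (0:ℝ) ≤ Real.sqrt (M^2 - a^2 + l^2 - Q^2) := Real.sqrt_nonneg _
  have hxM : M + Real.sqrt (M^2 - a^2 + l^2 - Q^2) < x := by
    rw [hrp] at hx; exact hx
  have hxpos : 0 < x := by linarith
  have hΔpos : 0 < Δ x := by rw [hΔ]; nlinarith
  have hsin : 0 < Real.sin θ := Real.sin_pos_of_pos_of_lt_pi hθ.1 hθ.2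
  set s := Real.sqrt (Δ x) with hsdef
  have hspos : 0 < s := Real.sqrt_pos.mpr hΔpos
  have hs2 : s ^ 2 = Δ x := Real.sq_sqrt hΔpos.le
  -- derivative of Δ
  have hdΔ : HasDerivAt Δ (2*x - 2*M) x := by
    have h1 : HasDerivAt (fun y : ℝ => y^2 - 2*M*y + a^2 - l^2 + Q^2) (2*x - 2*M) x := by
      have hp : HasDerivAt (fun y : ℝ => y^2) (2*x) x := by
        simpa using hasDerivAt_pow 2 x
      have hm : HasDerivAt (fun y : ℝ => 2*M*y) (2*M) x := by
        simpa using (hasDerivAt_id x).const_mul (2*M)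
      simpa using (((hp.sub hm).add_const (a^2)).sub_const (l^2)).add_const (Q^2)
    exact h1.congr_of_eventuallyEq (Filter.Eventually.of_forall hΔ)
  have hds : HasDerivAt (fun y => Real.sqrt (Δ y)) ((2*x - 2*M) / (2*s)) x :=
    hdΔ.sqrt hΔpos.ne'
  -- numerator derivative
  have hg : HasDerivAt (fun y => (2*y - 2*M) * (y^2 + C^2) - 4*y*Δ y)
      (2*(x^2 + C^2) + (2*x - 2*M)*(2*x) - (4*Δ x + 4*x*(2*x - 2*M))) x := by
    have h1 : HasDerivAt (fun y : ℝ => 2*y - 2*M) 2 x := by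
      simpa using ((hasDerivAt_id x).const_mul 2).sub_const (2*M)
    have h2 : HasDerivAt (fun y : ℝ => y^2 + C^2) (2*x) x := by
      simpa using (hasDerivAt_pow 2 x).add_const (C^2)
    have h3 : HasDerivAt (fun y : ℝ => 4*y) 4 x := by
      simpa using (hasDerivAt_id x).const_mul 4
    have h4 := (h1.mul h2).sub (h3.mul hdΔ)
    convert h4 using 1
    all_goals rfl
  -- denominator derivative
  have hh : HasDerivAt (fun y => 4*a*y*Real.sqrt (Δ y) * Real.sin θ)
      ((4*a*s + 4*a*x*((2*x - 2*M)/(2*s))) * Real.sin θ) x := by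
    have h4 : HasDerivAt (fun y : ℝ => 4*a*y) (4*a) x := by
      simpa using (hasDerivAt_id x).const_mul (4*a)
    have h5 := (h4.mul hds).mul_const (Real.sin θ)
    convert h5 using 1
    all_goals rfl
  have hne : 4*a*x*Real.sqrt (Δ x) * Real.sin θ ≠ 0 := by
    have : 0 < 4*a*x*Real.sqrt (Δ x) * Real.sin θ := by
      rw [← hsdef]
      have h1 : (0:ℝ) < 4*a := by linarith
      exact mul_pos (mul_pos (mul_pos h1 hxpos) hspos) hsin
    exact this.ne'
  have hq := hg.div hh hne
  have hfq := hq.congr_of_eventuallyEq (Filter.Eventually.of_forall hf)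
  convert hfq using 1
  rfl
  rfl
  rw [← hsdef]
  rw [← hs2]
  have hs5 : s^5 = (x^2 - 2*M*x + a^2 - l^2 + Q^2) * s^3 := by
    rw [← hΔ x, ← hs2]; ring
  have hΔx := hΔ x
  field_simp
  ring_nf
  rw [hs2, hΔx]
  ring_nf
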